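/- arXiv:2303.10233 — 2 statements merged into one kernel-verified Lean document; each statement's English description precedes it below -/
import Mathlib

section
/- Suppose (φ_1,…,φ_m) and (ψ_1,…,ψ_r) are each linearly independent families in a real inner product space, and the only vector lying in both span{φ_i} and span{ψ_j} is a one-dimensional subspace spanned by a nonzero vector c which can be written c = ∑ aᵢ φᵢ = ∑ bⱼ ψⱼ. Then the nullspace of the Gram matrix of the combined family (φ_1,…,φ_m, ψ_1,…,ψ_r) is the one-dimensional span of the vector k = (a_1,…,a_m, −b_1,…,−b_r). -/
open Matrix

open scoped RealInnerProductSpace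

theorem stmt_3 {E : Type*} [NormedAddCommGroup E] [InnerProductSpace ℝ E]
    {m r : ℕ} (φ : Fin m → E) (ψ : Fin r → E)
    (hφ : LinearIndependent ℝ φ) (hψ : LinearIndependent ℝ ψ)
    (c : E) (hc : c ≠ 0)
    (hinter : Submodule.span ℝ (Set.range φ) ⊓ Submodule.span ℝ (Set.range ψ) =
      Submodule.span ℝ {c})
    (a : Fin m → ℝ) (b : Fin r → ℝ)
    (hca : c = ∑ i, a i • φ i) (hcb : c = ∑ j, b j • ψ j)
    (G : Matrix (Fin m ⊕ Fin r) (Fin m ⊕ Fin r) ℝ)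
    (hG : ∀ i j, G i j = inner ℝ (Sum.elim φ ψ i) (Sum.elim φ ψ j)) :
    LinearMap.ker (Matrix.toLin' G) =
      Submodule.span ℝ {Sum.elim a (fun j => -b j)} := by
  set F := Sum.elim φ ψ with hF
  -- Key characterization of the kernel
  have key : ∀ x : (Fin m ⊕ Fin r) → ℝ,
      Matrix.toLin' G x = 0 ↔ (∑ i, x i • F i) = 0 := by
    intro x
    have happ : ∀ j, Matrix.toLin' G x j = ⟪F j, ∑ i, x i • F i⟫ := by
      intro j
      rw [inner_sum]
      simp only [Matrix.toLin'_apply, Matrix.mulVec, dotProduct, hG,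
        real_inner_smul_right]
      exact Finset.sum_congr rfl fun i _ => mul_comm _ _
    constructor
    · intro h
      have hv : ⟪(∑ i, x i • F i : E), ∑ i, x i • F i⟫ = 0 := by
        rw [sum_inner]
        refine Finset.sum_eq_zero fun j _ => ?_
        rw [real_inner_smul_left, ← happ j, h]
        simp
      exact inner_self_eq_zero.mp hv
    · intro h
      funext j
      rw [happ j, h, inner_zero_right]
      rfl
  ext x
  simp only [LinearMap.mem_ker, key, Submodule.mem_span_singleton]
  constructor
  · intro h
    have hsplit : (∑ i : Fin m, x (Sum.inl i) • φ i) +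
        (∑ j : Fin r, x (Sum.inr j) • ψ j) = 0 := by
      simpa [Fintype.sum_sum_type, hF] using h
    have hu2 : (∑ i : Fin m, x (Sum.inl i) • φ i) =
        ∑ j : Fin r, (-(x (Sum.inr j))) • ψ j := by
      simp only [neg_smul, Finset.sum_neg_distrib]
      exact eq_neg_of_add_eq_zero_left hsplit
    have humem : (∑ i : Fin m, x (Sum.inl i) • φ i) ∈
        Submodule.span ℝ (Set.range φ) ⊓ Submodule.span ℝ (Set.range ψ) := by
      constructor
      · exact Submodule.sum_mem _ fun i _ =>
          Submodule.smul_mem _ _ (Submodule.subset_span ⟨i, rfl⟩)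
      · rw [hu2]
        exact Submodule.sum_mem _ fun j _ =>
          Submodule.smul_mem _ _ (Submodule.subset_span ⟨j, rfl⟩)
    rw [hinter, Submodule.mem_span_singleton] at humem
    obtain ⟨t, ht⟩ := humem
    refine ⟨t, ?_⟩
    have hleft : ∀ i, x (Sum.inl i) = t * a i := by
      have h1 : (∑ i : Fin m, (t * a i) • φ i) = ∑ i : Fin m, x (Sum.inl i) • φ i := by
        simp only [← smul_smul]
        rw [← Finset.smul_sum, ← hca, ht]
      have hz : (∑ i : Fin m, (x (Sum.inl i) - t * a i) • φ i) = 0 := by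
        simp only [sub_smul, Finset.sum_sub_distrib, h1, sub_self]
      intro i
      have := Fintype.linearIndependent_iff.mp hφ _ hz i
      linarith
    have hright : ∀ j, x (Sum.inr j) = -(t * b j) := by
      have h2 : (∑ j : Fin r, (t * b j) • ψ j) = ∑ j : Fin r, (-(x (Sum.inr j))) • ψ j := by
        simp only [← smul_smul]
        rw [← Finset.smul_sum, ← hcb, ht, hu2]
      have hz : (∑ j : Fin r, (x (Sum.inr j) + t * b j) • ψ j) = 0 := by
        simp only [add_smul, Finset.sum_add_distrib, h2, neg_smul,
          Finset.sum_neg_distrib, add_neg_cancel]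
      intro j
      have := Fintype.linearIndependent_iff.mp hψ _ hz j
      linarith
    funext i
    cases i with
    | inl i => simp [hleft i]
    | inr j => simp [hright j]
  · rintro ⟨t, rfl⟩
    have hk : (∑ i, (Sum.elim a fun j => -b j) i • F i) = 0 := by
      rw [Fintype.sum_sum_type]
      simp only [hF, Sum.elim_inl, Sum.elim_inr, neg_smul]
      rw [Finset.sum_neg_distrib, ← hca, ← hcb]
      simp
    calc (∑ i, (t • Sum.elim a fun j => -b j) i • F i)
        = t • ∑ i, (Sum.elim a fun j => -b j) i • F i := by
          rw [Finset.smul_sum]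
          exact Finset.sum_congr rfl fun i _ => by
            simp only [Pi.smul_apply, smul_eq_mul, smul_smul]
      _ = 0 := by rw [hk, smul_zero]
end

section
/- Let M be symmetric positive semidefinite and write M = L + D + Lᵀ with D = diag(M) positive definite and L strictly lower triangular. Then the symmetric Gauss–Seidel iteration matrix G = (D+Lᵀ)⁻¹ D (D+L)⁻¹ M satisfies 0 ≤ xᵀ M G x ≤ xᵀ M x for all x, i.e. all eigenvalues of G restricted to the range of M lie in [0, 1]. -/
open Matrix

theorem stmt_17 {n : ℕ}
    (M L : Matrix (Fin n) (Fin n) ℝ) (hM : M.PosSemidef)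
    (hdiag : ∀ i, 0 < M i i)
    (hL : ∀ i j : Fin n, i ≤ j → L i j = 0)
    (hsplit : M = L + Matrix.diagonal (fun i => M i i) + Lᵀ) :
    ∀ x : Fin n → ℝ,
      0 ≤ x ⬝ᵥ M.mulVec
          (((Matrix.diagonal (fun i => M i i) + Lᵀ)⁻¹ *
            Matrix.diagonal (fun i => M i i) *
            (Matrix.diagonal (fun i => M i i) + L)⁻¹ * M).mulVec x) ∧
      x ⬝ᵥ M.mulVec
          (((Matrix.diagonal (fun i => M i i) + Lᵀ)⁻¹ *
            Matrix.diagonal (fun i => M i i) *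
            (Matrix.diagonal (fun i => M i i) + L)⁻¹ * M).mulVec x) ≤
        x ⬝ᵥ M.mulVec x := by
  intro x
  have hsym : Mᵀ = M := hM.1
  set D : Matrix (Fin n) (Fin n) ℝ := Matrix.diagonal (fun i => M i i) with hD
  set A : Matrix (Fin n) (Fin n) ℝ := D + L with hA
  have hAT : D + Lᵀ = Aᵀ := by
    rw [hA, transpose_add, Matrix.diagonal_transpose]
  -- helper for dot products
  have hdp : ∀ (B : Matrix (Fin n) (Fin n) ℝ) (u v : Fin n → ℝ),
      u ⬝ᵥ B.mulVec v = Bᵀ.mulVec u ⬝ᵥ v := by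
    intro B u v
    rw [dotProduct_mulVec, ← Matrix.vecMul_transpose, Matrix.transpose_transpose]
  -- A is invertible
  have hAlt : A.BlockTriangular OrderDual.toDual := by
    intro i j hij
    have hij' : (i : Fin n) < j := hij
    have h1 : D i j = 0 := by
      rw [hD]; exact Matrix.diagonal_apply_ne _ (ne_of_lt hij')
    simp [hA, Matrix.add_apply, h1, hL i j (le_of_lt hij')]
  have hdet : A.det = ∏ i, M i i := by
    rw [Matrix.det_of_lowerTriangular A hAlt]
    congr 1
    ext i
    simp [hA, hD, Matrix.add_apply, hL i i le_rfl]
  have hdet0 : IsUnit A.det := by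
    rw [hdet]
    exact (Finset.prod_pos (fun i _ => hdiag i)).ne'.isUnit
  have hAinv : A * A⁻¹ = 1 := Matrix.mul_nonsing_inv A hdet0
  set y : Fin n → ℝ := A⁻¹.mulVec (M.mulVec x) with hy
  have hAy : A.mulVec y = M.mulVec x := by
    rw [hy, Matrix.mulVec_mulVec, hAinv, Matrix.one_mulVec]
  -- the quadratic form equals y ⬝ᵥ D y
  have hATinv : (Aᵀ)⁻¹ᵀ = A⁻¹ := by
    rw [← Matrix.transpose_nonsing_inv, Matrix.transpose_transpose]
  have hq : x ⬝ᵥ M.mulVec (((D + Lᵀ)⁻¹ * D * (D + L)⁻¹ * M).mulVec x)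
      = y ⬝ᵥ D.mulVec y := by
    rw [hAT, ← hA]
    rw [show ((Aᵀ)⁻¹ * D * A⁻¹ * M).mulVec x
        = (Aᵀ)⁻¹.mulVec (D.mulVec (A⁻¹.mulVec (M.mulVec x))) by
      simp [Matrix.mulVec_mulVec, Matrix.mul_assoc]]
    rw [hdp M x, hsym, hdp ((Aᵀ)⁻¹), hATinv]
  -- nonnegativity of y ⬝ᵥ D y
  have hDnn : 0 ≤ y ⬝ᵥ D.mulVec y := by
    rw [hD]
    simp only [Matrix.mulVec_diagonal, dotProduct]
    apply Finset.sum_nonneg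
    intro i _
    have := (hdiag i).le
    nlinarith [sq_nonneg (y i)]
  -- symmetry facts
  have hxy : x ⬝ᵥ M.mulVec y = y ⬝ᵥ M.mulVec x := by
    rw [hdp M x y, hsym, dotProduct_comm]
  -- D = A + Aᵀ - M
  have hDeq : D = A + Aᵀ - M := by
    have h2 : A + Aᵀ = M + D := by
      rw [hA, transpose_add, Matrix.diagonal_transpose, ← hD]
      rw [hsplit]
      abel
    rw [h2]
    abel
  have hyDy : y ⬝ᵥ D.mulVec y = 2 * (y ⬝ᵥ M.mulVec x) - y ⬝ᵥ M.mulVec y := by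
    rw [hDeq]
    rw [Matrix.sub_mulVec, Matrix.add_mulVec, dotProduct_sub, dotProduct_add, hAy]
    have : y ⬝ᵥ Aᵀ.mulVec y = y ⬝ᵥ M.mulVec x := by
      rw [hdp Aᵀ, Matrix.transpose_transpose, hAy, dotProduct_comm]
    rw [this]
    ring
  -- the key PSD estimate
  have hkey : 0 ≤ (x - y) ⬝ᵥ M.mulVec (x - y) := by simpa using hM.dotProduct_mulVec_nonneg (x - y)
  have hexp : (x - y) ⬝ᵥ M.mulVec (x - y)
      = x ⬝ᵥ M.mulVec x - 2 * (y ⬝ᵥ M.mulVec x) + y ⬝ᵥ M.mulVec y := by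
    rw [Matrix.mulVec_sub, sub_dotProduct, dotProduct_sub, dotProduct_sub, hxy]
    ring
  constructor
  · rw [hq]; exact hDnn
  · rw [hq, hyDy]
    rw [hexp] at hkey
    linarith
end
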